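/- Let C and Z be bounded operators on H, let T = C∘Z − Z∘C, and let (k_n)_{n≥1} be a sequence of positive integers with partial sums s_n. Suppose at least one of C, Z is block tridiagonal with central block sizes k_n. Then for every n ≥ 1: ∑_{j=1}^{s_n} ⟨e_j, T e_j⟩ = ∑_{j=1}^{s_n} ⟨e_j, (A_n(C)∘B_n(Z) − A_n(Z)∘B_n(C)) e_j⟩, and |∑_{j=1}^{s_n} ⟨e_j, T e_j⟩| ≤ k_n·(‖A_n(C)‖ + ‖B_n(C)‖)·‖Z‖. -/

import Mathlib

open Filter

variable {H : Type*} [NormedAddCommGroup H] [InnerProductSpace ℂ H] [CompleteSpace H]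

/-- Partial sums `s n = k 1 + ⋯ + k n` of a sequence of block sizes (with `s 0 = 0`). -/
def psum (k : ℕ → ℕ) (n : ℕ) : ℕ := ∑ j ∈ Finset.Icc 1 n, k j

/-- The block index `b i` of an index `i ≥ 1`: the unique `n` with `s (n-1) < i ≤ s n`
(realized as the least `n` with `i ≤ s n`). -/
noncomputable def blockIdx (k : ℕ → ℕ) (i : ℕ) : ℕ := sInf {n | i ≤ psum k n}

/-- A bounded operator `W` is block tridiagonal with central block sizes `k n` if
`⟪e i, W (e j)⟫ = 0` whenever `|b i - b j| ≥ 2`. -/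
def IsBlockTridiagonal (e : HilbertBasis ℕ+ ℂ H) (k : ℕ → ℕ) (W : H →L[ℂ] H) : Prop :=
  ∀ i j : ℕ+, 2 ≤ |(blockIdx k (i : ℕ) : ℤ) - (blockIdx k (j : ℕ) : ℤ)| →
    (inner ℂ (e i) (W (e j)) : ℂ) = 0

/-- The orthogonal projection `P n` onto `span {e i : s (n-1) < i ≤ s n}`. -/
noncomputable def blockProj (e : HilbertBasis ℕ+ ℂ H) (k : ℕ → ℕ) (n : ℕ) : H →L[ℂ] H :=
  ∑ i ∈ (Finset.Ioc (psum k (n - 1)) (psum k n)).attach,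
    (innerSL ℂ (e ⟨i.1, Nat.lt_of_le_of_lt (Nat.zero_le _) (Finset.mem_Ioc.mp i.2).1⟩)).smulRight
      (e ⟨i.1, Nat.lt_of_le_of_lt (Nat.zero_le _) (Finset.mem_Ioc.mp i.2).1⟩)

/-- The partial trace `∑_{j=1}^m ⟪e j, T (e j)⟫`. -/
noncomputable def ptrace (e : HilbertBasis ℕ+ ℂ H) (T : H →L[ℂ] H) (m : ℕ) : ℂ :=
  ∑ i ∈ (Finset.Icc 1 m).attach,
    (inner ℂ (e ⟨i.1, (Finset.mem_Icc.mp i.2).1⟩) (T (e ⟨i.1, (Finset.mem_Icc.mp i.2).1⟩)) : ℂ)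

/-- The upper off-diagonal block `A n (W) = P n ∘ W ∘ P (n+1)`. -/
noncomputable def blockA (e : HilbertBasis ℕ+ ℂ H) (k : ℕ → ℕ) (n : ℕ) (W : H →L[ℂ] H) :
    H →L[ℂ] H :=
  blockProj e k n ∘L W ∘L blockProj e k (n + 1)

/-- The lower off-diagonal block `B n (W) = P (n+1) ∘ W ∘ P n`. -/
noncomputable def blockB (e : HilbertBasis ℕ+ ℂ H) (k : ℕ → ℕ) (n : ℕ) (W : H →L[ℂ] H) :
    H →L[ℂ] H :=
  blockProj e k (n + 1) ∘L W ∘L blockProj e k n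

set_option linter.unusedSectionVars false
set_option linter.unusedVariables false

local notation "⟪" x ", " y "⟫" => @inner ℂ _ _ x y

noncomputable def ebar (e : HilbertBasis ℕ+ ℂ H) (i : ℕ) : H :=
  if h : 0 < i then e ⟨i, h⟩ else 0
lemma ebar_pos (e : HilbertBasis ℕ+ ℂ H) {i : ℕ} (h : 0 < i) : ebar e i = e ⟨i, h⟩ := dif_pos h
lemma ebar_neg (e : HilbertBasis ℕ+ ℂ H) {i : ℕ} (h : ¬ 0 < i) : ebar e i = 0 := dif_neg h
lemma ebar_coe (e : HilbertBasis ℕ+ ℂ H) (i : ℕ+) : ebar e (i : ℕ) = e i := ebar_pos e i.2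
lemma norm_ebar (e : HilbertBasis ℕ+ ℂ H) {i : ℕ} (h : 0 < i) : ‖ebar e i‖ = 1 := by
  rw [ebar_pos e h]; exact e.orthonormal.1 _
lemma inner_ebar_ebar (e : HilbertBasis ℕ+ ℂ H) (i j : ℕ) :
    ⟪ebar e i, ebar e j⟫ = if i = j ∧ 0 < i then 1 else 0 := by
  by_cases hi : 0 < i
  · by_cases hj : 0 < j
    · rw [ebar_pos e hi, ebar_pos e hj, orthonormal_iff_ite.mp e.orthonormal (⟨i, hi⟩ : ℕ+) ⟨j, hj⟩]
      by_cases hij : i = j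
      · subst hij; simp [hi]; rfl
      · rw [if_neg, if_neg]
        · simp [hij]
        · exact fun hc => hij (congrArg Subtype.val hc)
    · rw [ebar_neg e hj, inner_zero_right, if_neg]
      rintro ⟨rfl, _⟩; exact hj hi
  · rw [ebar_neg e hi, inner_zero_left, if_neg]
    rintro ⟨_, h⟩; exact hi h

noncomputable def Pfin (e : HilbertBasis ℕ+ ℂ H) (T : Finset ℕ) : H →L[ℂ] H :=
  ∑ i ∈ T, (innerSL ℂ (ebar e i)).smulRight (ebar e i)

lemma Pfin_apply (e : HilbertBasis ℕ+ ℂ H) (T : Finset ℕ) (x : H) :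
    Pfin e T x = ∑ i ∈ T, ⟪ebar e i, x⟫ • ebar e i := by
  simp [Pfin, ContinuousLinearMap.sum_apply]

lemma inner_Pfin (e : HilbertBasis ℕ+ ℂ H) (T : Finset ℕ) {i : ℕ} (hi : 0 < i) (x : H) :
    ⟪ebar e i, Pfin e T x⟫ = if i ∈ T then ⟪ebar e i, x⟫ else 0 := by
  rw [Pfin_apply, inner_sum]
  rw [Finset.sum_congr rfl (fun j _ => ?_), Finset.sum_ite_eq]
  rw [inner_smul_right, inner_ebar_ebar]
  by_cases h : i = j
  · subst h; simp [hi]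
  · simp [h]

lemma Pfin_ebar (e : HilbertBasis ℕ+ ℂ H) (T : Finset ℕ) (j : ℕ) :
    Pfin e T (ebar e j) = if j ∈ T then ebar e j else 0 := by
  rw [Pfin_apply]
  rw [Finset.sum_congr rfl (fun i _ => ?_), Finset.sum_ite_eq]
  rw [inner_ebar_ebar]
  by_cases h : i = j
  · subst h
    by_cases hi0 : 0 < i
    · simp [hi0]
    · simp [ebar_neg e hi0]
  · have hji : ¬ j = i := fun hc => h hc.symm
    simp [h, hji]

lemma Pfin_inner_left (e : HilbertBasis ℕ+ ℂ H) (T : Finset ℕ) (x y : H) :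
    ⟪Pfin e T x, y⟫ = ⟪x, Pfin e T y⟫ := by
  rw [Pfin_apply, Pfin_apply, sum_inner, inner_sum]
  refine Finset.sum_congr rfl fun i _ => ?_
  rw [inner_smul_left, inner_smul_right, ← inner_conj_symm x (ebar e i)]
  ring

lemma Pfin_idem_apply (e : HilbertBasis ℕ+ ℂ H) (T : Finset ℕ) (x : H) :
    Pfin e T (Pfin e T x) = Pfin e T x := by
  conv_lhs => rw [Pfin_apply e T x]
  rw [map_sum]
  conv_rhs => rw [Pfin_apply]
  refine Finset.sum_congr rfl fun i hi => ?_
  rw [map_smul, Pfin_ebar, if_pos hi]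

lemma Pfin_idem (e : HilbertBasis ℕ+ ℂ H) (T : Finset ℕ) :
    Pfin e T ∘L Pfin e T = Pfin e T :=
  ContinuousLinearMap.ext fun x => Pfin_idem_apply e T x

lemma norm_Pfin_apply_le (e : HilbertBasis ℕ+ ℂ H) (T : Finset ℕ) (x : H) :
    ‖Pfin e T x‖ ≤ ‖x‖ := by
  have h1 : ⟪Pfin e T x, Pfin e T x⟫ = ⟪x, Pfin e T x⟫ := by
    rw [Pfin_inner_left, Pfin_idem_apply]
  have h2 : ‖Pfin e T x‖ ^ 2 ≤ ‖x‖ * ‖Pfin e T x‖ := by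
    calc ‖Pfin e T x‖ ^ 2 = RCLike.re ⟪Pfin e T x, Pfin e T x⟫ := by
          rw [inner_self_eq_norm_sq]
      _ = RCLike.re ⟪x, Pfin e T x⟫ := by rw [h1]
      _ ≤ ‖(⟪x, Pfin e T x⟫ : ℂ)‖ := RCLike.re_le_norm _
      _ ≤ ‖x‖ * ‖Pfin e T x‖ := norm_inner_le_norm _ _
  nlinarith [norm_nonneg x, norm_nonneg (Pfin e T x)]

lemma norm_Pfin_le (e : HilbertBasis ℕ+ ℂ H) (T : Finset ℕ) : ‖Pfin e T‖ ≤ 1 :=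
  ContinuousLinearMap.opNorm_le_bound _ zero_le_one fun x => by
    rw [one_mul]; exact norm_Pfin_apply_le e T x

lemma norm_PWP_le (e : HilbertBasis ℕ+ ℂ H) (S T : Finset ℕ) (W : H →L[ℂ] H) :
    ‖Pfin e S ∘L (W ∘L Pfin e T)‖ ≤ ‖W‖ := by
  have h1 : ‖W ∘L Pfin e T‖ ≤ ‖W‖ := by
    calc ‖W ∘L Pfin e T‖ ≤ ‖W‖ * ‖Pfin e T‖ := ContinuousLinearMap.opNorm_comp_le _ _
      _ ≤ ‖W‖ * 1 := mul_le_mul_of_nonneg_left (norm_Pfin_le e T) (norm_nonneg W)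
      _ = ‖W‖ := mul_one _
  calc ‖Pfin e S ∘L (W ∘L Pfin e T)‖ ≤ ‖Pfin e S‖ * ‖W ∘L Pfin e T‖ :=
        ContinuousLinearMap.opNorm_comp_le _ _
    _ ≤ 1 * ‖W‖ := mul_le_mul (norm_Pfin_le e S) h1 (norm_nonneg _) zero_le_one
    _ = ‖W‖ := one_mul _

noncomputable def trc (e : HilbertBasis ℕ+ ℂ H) (T : Finset ℕ) (X : H →L[ℂ] H) : ℂ :=
  ∑ i ∈ T, ⟪ebar e i, X (ebar e i)⟫

lemma trc_sub (e : HilbertBasis ℕ+ ℂ H) (T : Finset ℕ) (X Y : H →L[ℂ] H) :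
    trc e T (X - Y) = trc e T X - trc e T Y := by
  simp [trc, inner_sub_right, Finset.sum_sub_distrib]

lemma trc_add (e : HilbertBasis ℕ+ ℂ H) (T : Finset ℕ) (X Y : H →L[ℂ] H) :
    trc e T (X + Y) = trc e T X + trc e T Y := by
  simp [trc, inner_add_right, Finset.sum_add_distrib]

lemma trcL (e : HilbertBasis ℕ+ ℂ H) {S T : Finset ℕ} (hS : ∀ i ∈ S, 0 < i) (hST : S ⊆ T)
    (W : H →L[ℂ] H) : trc e T (Pfin e S ∘L W) = trc e S W := by
  have key : ∀ i : ℕ, ⟪ebar e i, Pfin e S (W (ebar e i))⟫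
      = if i ∈ S then ⟪ebar e i, W (ebar e i)⟫ else 0 := by
    intro i
    by_cases hi : 0 < i
    · rw [inner_Pfin e S hi]
    · have hiS : i ∉ S := fun h => hi (hS i h)
      rw [ebar_neg e hi, if_neg hiS, inner_zero_left]
  unfold trc
  simp only [ContinuousLinearMap.comp_apply]
  rw [Finset.sum_congr rfl fun i _ => key i, Finset.sum_ite_mem,
    Finset.inter_eq_right.mpr hST]

lemma trcR (e : HilbertBasis ℕ+ ℂ H) {S T : Finset ℕ} (hST : S ⊆ T)
    (W : H →L[ℂ] H) : trc e T (W ∘L Pfin e S) = trc e S W := by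
  have key : ∀ i : ℕ, ⟪ebar e i, W (Pfin e S (ebar e i))⟫
      = if i ∈ S then ⟪ebar e i, W (ebar e i)⟫ else 0 := by
    intro i
    rw [Pfin_ebar]
    by_cases hiS : i ∈ S
    · rw [if_pos hiS, if_pos hiS]
    · rw [if_neg hiS, if_neg hiS, map_zero, inner_zero_right]
  unfold trc
  simp only [ContinuousLinearMap.comp_apply]
  rw [Finset.sum_congr rfl fun i _ => key i, Finset.sum_ite_mem,
    Finset.inter_eq_right.mpr hST]

lemma trcL2 (e : HilbertBasis ℕ+ ℂ H) {T S : Finset ℕ} (hT : ∀ i ∈ T, 0 < i) (hTS : T ⊆ S)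
    (W : H →L[ℂ] H) : trc e T (Pfin e S ∘L W) = trc e T W := by
  unfold trc
  simp only [ContinuousLinearMap.comp_apply]
  refine Finset.sum_congr rfl fun i hi => ?_
  rw [inner_Pfin e S (hT i hi), if_pos (hTS hi)]

lemma trcR2 (e : HilbertBasis ℕ+ ℂ H) {T S : Finset ℕ} (hTS : T ⊆ S)
    (W : H →L[ℂ] H) : trc e T (W ∘L Pfin e S) = trc e T W := by
  unfold trc
  simp only [ContinuousLinearMap.comp_apply]
  refine Finset.sum_congr rfl fun i hi => ?_
  rw [Pfin_ebar, if_pos (hTS hi)]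

lemma trc_middleP (e : HilbertBasis ℕ+ ℂ H) {T : Finset ℕ} (X Y : H →L[ℂ] H) :
    trc e T (X ∘L (Pfin e T ∘L Y)) =
      ∑ i ∈ T, ∑ j ∈ T, ⟪ebar e j, Y (ebar e i)⟫ * ⟪ebar e i, X (ebar e j)⟫ := by
  unfold trc
  refine Finset.sum_congr rfl fun i hi => ?_
  simp only [ContinuousLinearMap.comp_apply]
  rw [Pfin_apply, map_sum, inner_sum]
  refine Finset.sum_congr rfl fun j hj => ?_
  rw [map_smul, inner_smul_right]

lemma trc_middleP_comm (e : HilbertBasis ℕ+ ℂ H) {T : Finset ℕ} (X Y : H →L[ℂ] H) :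
    trc e T (X ∘L (Pfin e T ∘L Y)) = trc e T (Y ∘L (Pfin e T ∘L X)) := by
  rw [trc_middleP, trc_middleP, Finset.sum_comm]
  exact Finset.sum_congr rfl fun i _ => Finset.sum_congr rfl fun j _ => mul_comm _ _

lemma trc_bound (e : HilbertBasis ℕ+ ℂ H) {T : Finset ℕ} (hT : ∀ i ∈ T, 0 < i)
    (W : H →L[ℂ] H) : ‖trc e T W‖ ≤ (T.card : ℝ) * ‖W‖ := by
  unfold trc
  calc ‖∑ i ∈ T, ⟪ebar e i, W (ebar e i)⟫‖
      ≤ ∑ i ∈ T, ‖⟪ebar e i, W (ebar e i)⟫‖ := norm_sum_le _ _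
    _ ≤ ∑ _i ∈ T, ‖W‖ := Finset.sum_le_sum fun i hi => ?_
    _ = (T.card : ℝ) * ‖W‖ := by rw [Finset.sum_const, nsmul_eq_mul]
  calc ‖⟪ebar e i, W (ebar e i)⟫‖
      = ‖(⟪ebar e i, W (ebar e i)⟫ : ℂ)‖ := rfl
    _ ≤ ‖ebar e i‖ * ‖W (ebar e i)‖ := norm_inner_le_norm _ _
    _ = ‖W (ebar e i)‖ := by rw [norm_ebar e (hT i hi), one_mul]
    _ ≤ ‖W‖ * ‖ebar e i‖ := W.le_opNorm _
    _ = ‖W‖ := by rw [norm_ebar e (hT i hi), mul_one]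

-- psum lemmas
lemma psum_zero (k : ℕ → ℕ) : psum k 0 = 0 := by simp [psum]

lemma psum_mono (k : ℕ → ℕ) : Monotone (psum k) := fun a b hab =>
  Finset.sum_le_sum_of_subset (Finset.Icc_subset_Icc_right hab)

lemma le_psum (k : ℕ → ℕ) (hk : ∀ n, 1 ≤ n → 1 ≤ k n) (i : ℕ) : i ≤ psum k i := by
  have h1 : i = ∑ _j ∈ Finset.Icc 1 i, 1 := by
    rw [Finset.sum_const, smul_eq_mul, mul_one, Nat.card_Icc, Nat.add_sub_cancel]
  have h2 : (∑ _j ∈ Finset.Icc 1 i, 1) ≤ psum k i :=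
    Finset.sum_le_sum fun j hj => hk j (Finset.mem_Icc.mp hj).1
  omega

lemma psum_succ_sub (k : ℕ → ℕ) {n : ℕ} (hn : 1 ≤ n) : psum k n = psum k (n - 1) + k n := by
  obtain ⟨m, rfl⟩ : ∃ m, n = m + 1 := ⟨n - 1, (Nat.succ_pred_eq_of_pos hn).symm⟩
  rw [psum, Finset.sum_Icc_succ_top (Nat.le_add_left 1 m)]
  simp [psum]

-- blockIdx lemmas
lemma le_psum_blockIdx (k : ℕ → ℕ) (hk : ∀ n, 1 ≤ n → 1 ≤ k n) (i : ℕ) :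
    i ≤ psum k (blockIdx k i) :=
  Nat.sInf_mem (⟨i, le_psum k hk i⟩ : {n | i ≤ psum k n}.Nonempty)

lemma blockIdx_pos (k : ℕ → ℕ) (hk : ∀ n, 1 ≤ n → 1 ≤ k n) {i : ℕ} (hi : 0 < i) :
    0 < blockIdx k i := by
  rcases Nat.eq_zero_or_pos (blockIdx k i) with h | h
  · exfalso
    have h2 := le_psum_blockIdx k hk i
    rw [h, psum_zero] at h2
    omega
  · exact h

lemma blockIdx_le (k : ℕ → ℕ) {i m : ℕ} (h : i ≤ psum k m) : blockIdx k i ≤ m :=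
  Nat.sInf_le h

lemma lt_blockIdx (k : ℕ → ℕ) (hk : ∀ n, 1 ≤ n → 1 ≤ k n) {i m : ℕ}
    (h : psum k m < i) : m < blockIdx k i := by
  by_contra hcon
  push_neg at hcon
  have h1 := le_psum_blockIdx k hk i
  have h2 := psum_mono k hcon
  omega

lemma psum_pred_lt (k : ℕ → ℕ) (hk : ∀ n, 1 ≤ n → 1 ≤ k n) {i : ℕ} (hi : 0 < i) :
    psum k (blockIdx k i - 1) < i := by
  by_contra hcon
  push_neg at hcon
  have h1 : blockIdx k i ≤ blockIdx k i - 1 := Nat.sInf_le hcon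
  have h2 := blockIdx_pos k hk hi
  omega

-- conversions
lemma blockProj_eq (e : HilbertBasis ℕ+ ℂ H) (k : ℕ → ℕ) (m : ℕ) :
    blockProj e k m = Pfin e (Finset.Ioc (psum k (m - 1)) (psum k m)) := by
  unfold blockProj Pfin
  rw [← Finset.sum_attach (Finset.Ioc (psum k (m - 1)) (psum k m))
      (fun i => (innerSL ℂ (ebar e i)).smulRight (ebar e i))]
  refine Finset.sum_congr rfl fun i _ => ?_
  have hpos : 0 < i.1 := Nat.lt_of_le_of_lt (Nat.zero_le _) (Finset.mem_Ioc.mp i.2).1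
  rw [ebar_pos e hpos]

lemma ptrace_eq (e : HilbertBasis ℕ+ ℂ H) (X : H →L[ℂ] H) (m : ℕ) :
    ptrace e X m = trc e (Finset.Icc 1 m) X := by
  unfold ptrace trc
  rw [← Finset.sum_attach (Finset.Icc 1 m) (fun i => ⟪ebar e i, X (ebar e i)⟫)]
  refine Finset.sum_congr rfl fun i _ => ?_
  have hpos : 0 < i.1 := (Finset.mem_Icc.mp i.2).1
  rw [ebar_pos e hpos]

-- extensionality
lemma ext_basis (e : HilbertBasis ℕ+ ℂ H) {x y : H}
    (h : ∀ i : ℕ+, ⟪e i, x⟫ = ⟪e i, y⟫) : x = y := by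
  apply e.repr.injective
  apply lp.ext
  funext i
  rw [e.repr_apply_apply, e.repr_apply_apply]
  exact h i

lemma clm_ext_basis (e : HilbertBasis ℕ+ ℂ H) {X Y : H →L[ℂ] H}
    (h : ∀ j : ℕ+, X (e j) = Y (e j)) : X = Y := by
  refine ContinuousLinearMap.ext_on
    (Submodule.dense_iff_topologicalClosure_eq_top.mpr e.dense_span) ?_
  rintro x ⟨j, rfl⟩
  exact h j

lemma tri_upper (e : HilbertBasis ℕ+ ℂ H) (k : ℕ → ℕ) (hk : ∀ n, 1 ≤ n → 1 ≤ k n)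
    {W : H →L[ℂ] H} (hW : IsBlockTridiagonal e k W) (n : ℕ) :
    Pfin e (Finset.Icc 1 (psum k n)) ∘L (W ∘L (1 - Pfin e (Finset.Icc 1 (psum k n)))) =
      Pfin e (Finset.Ioc (psum k (n - 1)) (psum k n)) ∘L
        (W ∘L Pfin e (Finset.Ioc (psum k n) (psum k (n + 1)))) := by
  apply clm_ext_basis e
  intro j
  apply ext_basis e
  intro i
  rw [← ebar_coe e j, ← ebar_coe e i]
  simp only [ContinuousLinearMap.comp_apply, ContinuousLinearMap.sub_apply,
    ContinuousLinearMap.one_apply]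
  by_cases hj : (j : ℕ) ≤ psum k n
  · have hjQ : (j : ℕ) ∈ Finset.Icc 1 (psum k n) := Finset.mem_Icc.mpr ⟨j.2, hj⟩
    have hjB2 : (j : ℕ) ∉ Finset.Ioc (psum k n) (psum k (n + 1)) := by
      simp only [Finset.mem_Ioc, not_and]; omega
    rw [Pfin_ebar e (Finset.Icc 1 (psum k n)) (j : ℕ), if_pos hjQ,
      Pfin_ebar e (Finset.Ioc (psum k n) (psum k (n + 1))) (j : ℕ), if_neg hjB2]
    simp
  · push_neg at hj
    have hjQ : (j : ℕ) ∉ Finset.Icc 1 (psum k n) := by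
      simp only [Finset.mem_Icc, not_and]; omega
    rw [Pfin_ebar e (Finset.Icc 1 (psum k n)) (j : ℕ), if_neg hjQ, sub_zero]
    by_cases hi : (i : ℕ) ≤ psum k n
    · have hiQ : (i : ℕ) ∈ Finset.Icc 1 (psum k n) := Finset.mem_Icc.mpr ⟨i.2, hi⟩
      rw [inner_Pfin e (Finset.Icc 1 (psum k n)) (i := (i:ℕ)) i.2, if_pos hiQ,
        inner_Pfin e (Finset.Ioc (psum k (n - 1)) (psum k n)) (i := (i:ℕ)) i.2]
      have hbi : blockIdx k (i : ℕ) ≤ n := blockIdx_le k hi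
      have hbj : n < blockIdx k (j : ℕ) := lt_blockIdx k hk hj
      by_cases h2 : blockIdx k (i : ℕ) + 2 ≤ blockIdx k (j : ℕ)
      · have hz : ⟪ebar e (i : ℕ), W (ebar e (j : ℕ))⟫ = 0 := by
          rw [ebar_coe, ebar_coe]
          apply hW i j
          have habs : |(blockIdx k (i : ℕ) : ℤ) - (blockIdx k (j : ℕ) : ℤ)|
              = (blockIdx k (j : ℕ) : ℤ) - (blockIdx k (i : ℕ) : ℤ) := by
            rw [abs_sub_comm]
            exact abs_of_nonneg (by push_cast; omega)
          rw [habs]; push_cast; omega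
        rw [hz, Pfin_ebar e (Finset.Ioc (psum k n) (psum k (n + 1))) (j : ℕ)]
        by_cases hjB2 : (j : ℕ) ∈ Finset.Ioc (psum k n) (psum k (n + 1))
        · rw [if_pos hjB2, hz]; simp
        · rw [if_neg hjB2]; simp
      · have hbi2 : blockIdx k (i : ℕ) = n := by omega
        have hbj2 : blockIdx k (j : ℕ) = n + 1 := by omega
        have hiB : (i : ℕ) ∈ Finset.Ioc (psum k (n - 1)) (psum k n) := by
          refine Finset.mem_Ioc.mpr ⟨?_, hi⟩
          have h3 := psum_pred_lt k hk (i := (i : ℕ)) i.2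
          rwa [hbi2] at h3
        have hjB2 : (j : ℕ) ∈ Finset.Ioc (psum k n) (psum k (n + 1)) := by
          refine Finset.mem_Ioc.mpr ⟨hj, ?_⟩
          have h3 := le_psum_blockIdx k hk (j : ℕ)
          rwa [hbj2] at h3
        rw [if_pos hiB, Pfin_ebar e (Finset.Ioc (psum k n) (psum k (n + 1))) (j : ℕ),
          if_pos hjB2]
    · have hiQ : (i : ℕ) ∉ Finset.Icc 1 (psum k n) := by
        simp only [Finset.mem_Icc, not_and]; omega
      have hiB : (i : ℕ) ∉ Finset.Ioc (psum k (n - 1)) (psum k n) := by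
        simp only [Finset.mem_Ioc, not_and]; omega
      rw [inner_Pfin e (Finset.Icc 1 (psum k n)) (i := (i:ℕ)) i.2, if_neg hiQ,
        inner_Pfin e (Finset.Ioc (psum k (n - 1)) (psum k n)) (i := (i:ℕ)) i.2, if_neg hiB]

lemma tri_lower (e : HilbertBasis ℕ+ ℂ H) (k : ℕ → ℕ) (hk : ∀ n, 1 ≤ n → 1 ≤ k n)
    {W : H →L[ℂ] H} (hW : IsBlockTridiagonal e k W) (n : ℕ) :
    (1 - Pfin e (Finset.Icc 1 (psum k n))) ∘L (W ∘L Pfin e (Finset.Icc 1 (psum k n))) =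
      Pfin e (Finset.Ioc (psum k n) (psum k (n + 1))) ∘L
        (W ∘L Pfin e (Finset.Ioc (psum k (n - 1)) (psum k n))) := by
  apply clm_ext_basis e
  intro j
  apply ext_basis e
  intro i
  rw [← ebar_coe e j, ← ebar_coe e i]
  simp only [ContinuousLinearMap.comp_apply, ContinuousLinearMap.sub_apply,
    ContinuousLinearMap.one_apply]
  by_cases hj : (j : ℕ) ≤ psum k n
  · have hjQ : (j : ℕ) ∈ Finset.Icc 1 (psum k n) := Finset.mem_Icc.mpr ⟨j.2, hj⟩
    rw [Pfin_ebar e (Finset.Icc 1 (psum k n)) (j : ℕ), if_pos hjQ]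
    by_cases hi : (i : ℕ) ≤ psum k n
    · have hiQ : (i : ℕ) ∈ Finset.Icc 1 (psum k n) := Finset.mem_Icc.mpr ⟨i.2, hi⟩
      have hiB2 : (i : ℕ) ∉ Finset.Ioc (psum k n) (psum k (n + 1)) := by
        simp only [Finset.mem_Ioc, not_and]; omega
      rw [inner_sub_right, inner_Pfin e (Finset.Icc 1 (psum k n)) (i := (i:ℕ)) i.2, if_pos hiQ, sub_self,
        inner_Pfin e (Finset.Ioc (psum k n) (psum k (n + 1))) (i := (i:ℕ)) i.2, if_neg hiB2]
    · push_neg at hi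
      have hiQ : (i : ℕ) ∉ Finset.Icc 1 (psum k n) := by
        simp only [Finset.mem_Icc, not_and]; omega
      have hbi : n < blockIdx k (i : ℕ) := lt_blockIdx k hk hi
      have hbj : blockIdx k (j : ℕ) ≤ n := blockIdx_le k hj
      rw [inner_sub_right, inner_Pfin e (Finset.Icc 1 (psum k n)) (i := (i:ℕ)) i.2, if_neg hiQ, sub_zero,
        inner_Pfin e (Finset.Ioc (psum k n) (psum k (n + 1))) (i := (i:ℕ)) i.2,
        Pfin_ebar e (Finset.Ioc (psum k (n - 1)) (psum k n)) (j : ℕ)]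
      by_cases h2 : blockIdx k (j : ℕ) + 2 ≤ blockIdx k (i : ℕ)
      · have hz : ⟪ebar e (i : ℕ), W (ebar e (j : ℕ))⟫ = 0 := by
          rw [ebar_coe, ebar_coe]
          apply hW i j
          have habs : |(blockIdx k (i : ℕ) : ℤ) - (blockIdx k (j : ℕ) : ℤ)|
              = (blockIdx k (i : ℕ) : ℤ) - (blockIdx k (j : ℕ) : ℤ) :=
            abs_of_nonneg (by push_cast; omega)
          rw [habs]; push_cast; omega
        rw [hz]
        by_cases hjB : (j : ℕ) ∈ Finset.Ioc (psum k (n - 1)) (psum k n)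
        · rw [if_pos hjB, hz]; simp
        · rw [if_neg hjB]; simp
      · have hbi2 : blockIdx k (i : ℕ) = n + 1 := by omega
        have hbj2 : blockIdx k (j : ℕ) = n := by omega
        have hiB2 : (i : ℕ) ∈ Finset.Ioc (psum k n) (psum k (n + 1)) := by
          refine Finset.mem_Ioc.mpr ⟨hi, ?_⟩
          have h3 := le_psum_blockIdx k hk (i : ℕ)
          rwa [hbi2] at h3
        have hjB : (j : ℕ) ∈ Finset.Ioc (psum k (n - 1)) (psum k n) := by
          refine Finset.mem_Ioc.mpr ⟨?_, hj⟩
          have h3 := psum_pred_lt k hk (i := (j : ℕ)) j.2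
          rwa [hbj2] at h3
        rw [if_pos hiB2, if_pos hjB]
  · push_neg at hj
    have hjQ : (j : ℕ) ∉ Finset.Icc 1 (psum k n) := by
      simp only [Finset.mem_Icc, not_and]; omega
    have hjB : (j : ℕ) ∉ Finset.Ioc (psum k (n - 1)) (psum k n) := by
      simp only [Finset.mem_Ioc, not_and]; omega
    rw [Pfin_ebar e (Finset.Icc 1 (psum k n)) (j : ℕ), if_neg hjQ,
      Pfin_ebar e (Finset.Ioc (psum k (n - 1)) (psum k n)) (j : ℕ), if_neg hjB]
    simp

lemma trc_left_form (e : HilbertBasis ℕ+ ℂ H) {S T : Finset ℕ} (hS : ∀ i ∈ S, 0 < i)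
    (hST : S ⊆ T) (U V Z : H →L[ℂ] H) :
    trc e T ((Pfin e S ∘L (U ∘L V)) ∘L Z) = trc e S (U ∘L (V ∘L Z)) := by
  rw [ContinuousLinearMap.comp_assoc, trcL e hS hST, ContinuousLinearMap.comp_assoc]

lemma trc_right_form (e : HilbertBasis ℕ+ ℂ H) {S T : Finset ℕ} (hST : S ⊆ T)
    (Z U V : H →L[ℂ] H) :
    trc e T (Z ∘L (U ∘L (V ∘L Pfin e S))) = trc e S (Z ∘L (U ∘L V)) := by
  have h : (Z ∘L (U ∘L V)) ∘L Pfin e S = Z ∘L (U ∘L (V ∘L Pfin e S)) := by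
    rw [ContinuousLinearMap.comp_assoc, ContinuousLinearMap.comp_assoc]
  rw [← h, trcR e hST]

lemma blockA_eq (e : HilbertBasis ℕ+ ℂ H) (k : ℕ → ℕ) (n : ℕ) (W : H →L[ℂ] H) :
    blockA e k n W = Pfin e (Finset.Ioc (psum k (n - 1)) (psum k n)) ∘L
      (W ∘L Pfin e (Finset.Ioc (psum k n) (psum k (n + 1)))) := by
  unfold blockA
  rw [blockProj_eq e k n, blockProj_eq e k (n + 1)]
  simp only [Nat.add_sub_cancel]

lemma blockB_eq (e : HilbertBasis ℕ+ ℂ H) (k : ℕ → ℕ) (n : ℕ) (W : H →L[ℂ] H) :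
    blockB e k n W = Pfin e (Finset.Ioc (psum k n) (psum k (n + 1))) ∘L
      (W ∘L Pfin e (Finset.Ioc (psum k (n - 1)) (psum k n))) := by
  unfold blockB
  rw [blockProj_eq e k n, blockProj_eq e k (n + 1)]
  simp only [Nat.add_sub_cancel]

lemma hposQ' (k : ℕ → ℕ) (n : ℕ) : ∀ i ∈ Finset.Icc 1 (psum k n), 0 < i :=
  fun _ hi => (Finset.mem_Icc.mp hi).1

lemma hposB' (k : ℕ → ℕ) (a b : ℕ) : ∀ i ∈ Finset.Ioc a b, 0 < i :=
  fun _ hi => Nat.lt_of_le_of_lt (Nat.zero_le _) (Finset.mem_Ioc.mp hi).1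

lemma hsub' (k : ℕ → ℕ) (n : ℕ) :
    Finset.Ioc (psum k (n - 1)) (psum k n) ⊆ Finset.Icc 1 (psum k n) := fun i hi =>
  Finset.mem_Icc.mpr ⟨hposB' k _ _ i hi, (Finset.mem_Ioc.mp hi).2⟩

lemma t_lemma (e : HilbertBasis ℕ+ ℂ H) (k : ℕ → ℕ) (n : ℕ) (X Y : H →L[ℂ] H) :
    trc e (Finset.Icc 1 (psum k n)) (blockA e k n X ∘L blockB e k n Y) =
      trc e (Finset.Ioc (psum k (n - 1)) (psum k n))
        (X ∘L (Pfin e (Finset.Ioc (psum k n) (psum k (n + 1))) ∘L Y)) := by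
  rw [blockA_eq, blockB_eq,
    trc_left_form e (hposB' k _ _) (hsub' k n)]
  have hmid : Pfin e (Finset.Ioc (psum k n) (psum k (n + 1))) ∘L
      (Pfin e (Finset.Ioc (psum k n) (psum k (n + 1))) ∘L
        (Y ∘L Pfin e (Finset.Ioc (psum k (n - 1)) (psum k n)))) =
      Pfin e (Finset.Ioc (psum k n) (psum k (n + 1))) ∘L
        (Y ∘L Pfin e (Finset.Ioc (psum k (n - 1)) (psum k n))) := by
    rw [← ContinuousLinearMap.comp_assoc, Pfin_idem]
  rw [hmid, trc_right_form e (subset_refl _)]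

lemma rhs_trc_eq (e : HilbertBasis ℕ+ ℂ H) (k : ℕ → ℕ) (C Z : H →L[ℂ] H) (n : ℕ) :
    trc e (Finset.Icc 1 (psum k n))
        (blockA e k n C ∘L blockB e k n Z - blockA e k n Z ∘L blockB e k n C) =
      trc e (Finset.Ioc (psum k (n - 1)) (psum k n))
          (C ∘L (Pfin e (Finset.Ioc (psum k n) (psum k (n + 1))) ∘L Z)) -
        trc e (Finset.Ioc (psum k (n - 1)) (psum k n))
          (Z ∘L (Pfin e (Finset.Ioc (psum k n) (psum k (n + 1))) ∘L C)) := by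
  rw [trc_sub, t_lemma, t_lemma]

lemma main_eq (e : HilbertBasis ℕ+ ℂ H) (k : ℕ → ℕ) (hk : ∀ n, 1 ≤ n → 1 ≤ k n)
    (C Z : H →L[ℂ] H)
    (htri : IsBlockTridiagonal e k C ∨ IsBlockTridiagonal e k Z) (n : ℕ) :
    trc e (Finset.Icc 1 (psum k n)) (C ∘L Z - Z ∘L C) =
      trc e (Finset.Ioc (psum k (n - 1)) (psum k n))
          (C ∘L (Pfin e (Finset.Ioc (psum k n) (psum k (n + 1))) ∘L Z)) -
        trc e (Finset.Ioc (psum k (n - 1)) (psum k n))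
          (Z ∘L (Pfin e (Finset.Ioc (psum k n) (psum k (n + 1))) ∘L C)) := by
  have hCZ : C ∘L ((1 - Pfin e (Finset.Icc 1 (psum k n))) ∘L Z)
      = C ∘L Z - C ∘L (Pfin e (Finset.Icc 1 (psum k n)) ∘L Z) := by
    rw [ContinuousLinearMap.sub_comp, ContinuousLinearMap.one_def,
      ContinuousLinearMap.id_comp, ContinuousLinearMap.comp_sub]
  have hZC : Z ∘L ((1 - Pfin e (Finset.Icc 1 (psum k n))) ∘L C)
      = Z ∘L C - Z ∘L (Pfin e (Finset.Icc 1 (psum k n)) ∘L C) := by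
    rw [ContinuousLinearMap.sub_comp, ContinuousLinearMap.one_def,
      ContinuousLinearMap.id_comp, ContinuousLinearMap.comp_sub]
  have e1 : trc e (Finset.Icc 1 (psum k n))
      (C ∘L ((1 - Pfin e (Finset.Icc 1 (psum k n))) ∘L Z))
      = trc e (Finset.Icc 1 (psum k n)) (C ∘L Z)
        - trc e (Finset.Icc 1 (psum k n)) (C ∘L (Pfin e (Finset.Icc 1 (psum k n)) ∘L Z)) := by
    rw [hCZ, trc_sub]
  have e2 : trc e (Finset.Icc 1 (psum k n))
      (Z ∘L ((1 - Pfin e (Finset.Icc 1 (psum k n))) ∘L C))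
      = trc e (Finset.Icc 1 (psum k n)) (Z ∘L C)
        - trc e (Finset.Icc 1 (psum k n)) (Z ∘L (Pfin e (Finset.Icc 1 (psum k n)) ∘L C)) := by
    rw [hZC, trc_sub]
  have key := trc_middleP_comm e (T := Finset.Icc 1 (psum k n)) C Z
  have u1 : trc e (Finset.Icc 1 (psum k n))
      (C ∘L ((1 - Pfin e (Finset.Icc 1 (psum k n))) ∘L Z))
      = trc e (Finset.Ioc (psum k (n - 1)) (psum k n))
          (C ∘L (Pfin e (Finset.Ioc (psum k n) (psum k (n + 1))) ∘L Z)) := by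
    rcases htri with hC | hZt
    · rw [← trcL2 e (hposQ' k n) (subset_refl _)
        (C ∘L ((1 - Pfin e (Finset.Icc 1 (psum k n))) ∘L Z))]
      have hassoc : (Pfin e (Finset.Icc 1 (psum k n)) ∘L
            (C ∘L (1 - Pfin e (Finset.Icc 1 (psum k n))))) ∘L Z
          = Pfin e (Finset.Icc 1 (psum k n)) ∘L
            (C ∘L ((1 - Pfin e (Finset.Icc 1 (psum k n))) ∘L Z)) := by
        rw [ContinuousLinearMap.comp_assoc, ContinuousLinearMap.comp_assoc]
      rw [← hassoc, tri_upper e k hk hC n, trc_left_form e (hposB' k _ _) (hsub' k n)]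
    · rw [← trcR2 e (subset_refl (Finset.Icc 1 (psum k n)))
        (C ∘L ((1 - Pfin e (Finset.Icc 1 (psum k n))) ∘L Z))]
      have hassoc : (C ∘L ((1 - Pfin e (Finset.Icc 1 (psum k n))) ∘L Z)) ∘L
            Pfin e (Finset.Icc 1 (psum k n))
          = C ∘L ((1 - Pfin e (Finset.Icc 1 (psum k n))) ∘L
              (Z ∘L Pfin e (Finset.Icc 1 (psum k n)))) := by
        rw [ContinuousLinearMap.comp_assoc, ContinuousLinearMap.comp_assoc]
      rw [hassoc, tri_lower e k hk hZt n, trc_right_form e (hsub' k n)]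
  have u2 : trc e (Finset.Icc 1 (psum k n))
      (Z ∘L ((1 - Pfin e (Finset.Icc 1 (psum k n))) ∘L C))
      = trc e (Finset.Ioc (psum k (n - 1)) (psum k n))
          (Z ∘L (Pfin e (Finset.Ioc (psum k n) (psum k (n + 1))) ∘L C)) := by
    rcases htri with hC | hZt
    · rw [← trcR2 e (subset_refl (Finset.Icc 1 (psum k n)))
        (Z ∘L ((1 - Pfin e (Finset.Icc 1 (psum k n))) ∘L C))]
      have hassoc : (Z ∘L ((1 - Pfin e (Finset.Icc 1 (psum k n))) ∘L C)) ∘L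
            Pfin e (Finset.Icc 1 (psum k n))
          = Z ∘L ((1 - Pfin e (Finset.Icc 1 (psum k n))) ∘L
              (C ∘L Pfin e (Finset.Icc 1 (psum k n)))) := by
        rw [ContinuousLinearMap.comp_assoc, ContinuousLinearMap.comp_assoc]
      rw [hassoc, tri_lower e k hk hC n, trc_right_form e (hsub' k n)]
    · rw [← trcL2 e (hposQ' k n) (subset_refl _)
        (Z ∘L ((1 - Pfin e (Finset.Icc 1 (psum k n))) ∘L C))]
      have hassoc : (Pfin e (Finset.Icc 1 (psum k n)) ∘L
            (Z ∘L (1 - Pfin e (Finset.Icc 1 (psum k n))))) ∘L C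
          = Pfin e (Finset.Icc 1 (psum k n)) ∘L
            (Z ∘L ((1 - Pfin e (Finset.Icc 1 (psum k n))) ∘L C)) := by
        rw [ContinuousLinearMap.comp_assoc, ContinuousLinearMap.comp_assoc]
      rw [← hassoc, tri_upper e k hk hZt n, trc_left_form e (hposB' k _ _) (hsub' k n)]
  rw [trc_sub, ← u1, ← u2, e1, e2, key]
  ring

lemma bound_lemma (e : HilbertBasis ℕ+ ℂ H) (k : ℕ → ℕ) (hk : ∀ n, 1 ≤ n → 1 ≤ k n)
    (C Z : H →L[ℂ] H) {n : ℕ} (hn : 1 ≤ n) :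
    ‖trc e (Finset.Icc 1 (psum k n))
        (blockA e k n C ∘L blockB e k n Z - blockA e k n Z ∘L blockB e k n C)‖ ≤
      (k n : ℝ) * (‖blockA e k n C‖ + ‖blockB e k n C‖) * ‖Z‖ := by
  have hBP : ∀ X Y : H →L[ℂ] H,
      (blockA e k n X ∘L blockB e k n Y) ∘L Pfin e (Finset.Ioc (psum k (n - 1)) (psum k n))
        = blockA e k n X ∘L blockB e k n Y := by
    intro X Y
    have hB : blockB e k n Y ∘L Pfin e (Finset.Ioc (psum k (n - 1)) (psum k n))
        = blockB e k n Y := by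
      rw [blockB_eq, ContinuousLinearMap.comp_assoc, ContinuousLinearMap.comp_assoc, Pfin_idem]
    rw [ContinuousLinearMap.comp_assoc, hB]
  have hD : (blockA e k n C ∘L blockB e k n Z - blockA e k n Z ∘L blockB e k n C) ∘L
      Pfin e (Finset.Ioc (psum k (n - 1)) (psum k n))
      = blockA e k n C ∘L blockB e k n Z - blockA e k n Z ∘L blockB e k n C := by
    rw [ContinuousLinearMap.sub_comp, hBP, hBP]
  have h1 := trcR e (hsub' k n)
    (blockA e k n C ∘L blockB e k n Z - blockA e k n Z ∘L blockB e k n C)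
  rw [hD] at h1
  rw [h1]
  have hcard : (Finset.Ioc (psum k (n - 1)) (psum k n)).card = k n := by
    rw [Nat.card_Ioc]
    have h2 := psum_succ_sub k hn
    omega
  have hnormA : ‖blockA e k n Z‖ ≤ ‖Z‖ := by
    rw [blockA_eq]; exact norm_PWP_le e _ _ Z
  have hnormB : ‖blockB e k n Z‖ ≤ ‖Z‖ := by
    rw [blockB_eq]; exact norm_PWP_le e _ _ Z
  have hDle : ‖blockA e k n C ∘L blockB e k n Z - blockA e k n Z ∘L blockB e k n C‖ ≤
      (‖blockA e k n C‖ + ‖blockB e k n C‖) * ‖Z‖ := by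
    calc ‖blockA e k n C ∘L blockB e k n Z - blockA e k n Z ∘L blockB e k n C‖
        ≤ ‖blockA e k n C ∘L blockB e k n Z‖ + ‖blockA e k n Z ∘L blockB e k n C‖ :=
          norm_sub_le _ _
      _ ≤ ‖blockA e k n C‖ * ‖blockB e k n Z‖ + ‖blockA e k n Z‖ * ‖blockB e k n C‖ :=
          add_le_add (ContinuousLinearMap.opNorm_comp_le _ _)
            (ContinuousLinearMap.opNorm_comp_le _ _)
      _ ≤ ‖blockA e k n C‖ * ‖Z‖ + ‖Z‖ * ‖blockB e k n C‖ :=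
          add_le_add (mul_le_mul_of_nonneg_left hnormB (norm_nonneg _))
            (mul_le_mul_of_nonneg_right hnormA (norm_nonneg _))
      _ = (‖blockA e k n C‖ + ‖blockB e k n C‖) * ‖Z‖ := by ring
  calc ‖trc e (Finset.Ioc (psum k (n - 1)) (psum k n))
          (blockA e k n C ∘L blockB e k n Z - blockA e k n Z ∘L blockB e k n C)‖
      ≤ ((Finset.Ioc (psum k (n - 1)) (psum k n)).card : ℝ) *
          ‖blockA e k n C ∘L blockB e k n Z - blockA e k n Z ∘L blockB e k n C‖ :=
        trc_bound e (hposB' k _ _) _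
    _ = (k n : ℝ) * ‖blockA e k n C ∘L blockB e k n Z - blockA e k n Z ∘L blockB e k n C‖ := by
        rw [hcard]
    _ ≤ (k n : ℝ) * ((‖blockA e k n C‖ + ‖blockB e k n C‖) * ‖Z‖) :=
        mul_le_mul_of_nonneg_left hDle (by positivity)
    _ = (k n : ℝ) * (‖blockA e k n C‖ + ‖blockB e k n C‖) * ‖Z‖ := by ring


/-- If `T = CZ - ZC` and at least one of `C, Z` is block tridiagonal with
central block sizes `k n`, then the partial trace of `T` over the first `n` blocks equals the
partial trace of `A n (C) ∘ B n (Z) - A n (Z) ∘ B n (C)`, and is bounded in modulus by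
`k n * (‖A n (C)‖ + ‖B n (C)‖) * ‖Z‖`. -/
theorem ptrace_commutator_blockTridiagonal
    (e : HilbertBasis ℕ+ ℂ H) (k : ℕ → ℕ) (hk : ∀ n, 1 ≤ n → 1 ≤ k n)
    (C Z : H →L[ℂ] H)
    (htri : IsBlockTridiagonal e k C ∨ IsBlockTridiagonal e k Z) :
    ∀ n, 1 ≤ n →
      ptrace e (C ∘L Z - Z ∘L C) (psum k n) =
        ptrace e (blockA e k n C ∘L blockB e k n Z - blockA e k n Z ∘L blockB e k n C)
          (psum k n) ∧
      ‖ptrace e (C ∘L Z - Z ∘L C) (psum k n)‖ ≤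
        (k n : ℝ) * (‖blockA e k n C‖ + ‖blockB e k n C‖) * ‖Z‖ := by
  intro n hn
  have h1 : ptrace e (C ∘L Z - Z ∘L C) (psum k n) =
      ptrace e (blockA e k n C ∘L blockB e k n Z - blockA e k n Z ∘L blockB e k n C)
        (psum k n) := by
    rw [ptrace_eq, ptrace_eq, main_eq e k hk C Z htri n, rhs_trc_eq e k C Z n]
  refine ⟨h1, ?_⟩
  rw [h1, ptrace_eq]
  exact bound_lemma e k hk C Z hn
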